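/- Let W be a connected, separable, completely metrizable topological space with more than one point, and suppose that every closed subset S ⊆ W for which W \ S is not connected is uncountable. Then W is not biconnected: there exists a subset Z ⊆ W such that both Z and W \ Z are connected and each contains more than one point. -/

import Mathlib

open Cardinal Set

universe u

/-- Transfinite construction of two disjoint "transversals" of a continuum-indexed
family of sets of size at least continuum, avoiding a given finite set. -/
lemma exists_disjoint_transversals {X ι : Type u} [Nonempty ι] (T : ι → Set X) (F : Set X)
    (hF : F.Finite) (hι : #ι ≤ continuum.{u}) (hT : ∀ i, continuum.{u} ≤ #(T i)) :
    ∃ A B : ι → X, (∀ i, A i ∈ T i) ∧ (∀ i, B i ∈ T i) ∧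
      (∀ i j, A i ≠ B j) ∧ (∀ i, A i ∉ F) ∧ (∀ i, B i ∉ F) := by
  classical
  obtain ⟨e⟩ : Nonempty (ι ↪ (continuum.{u}).ord.ToType) := by
    rw [← Cardinal.le_def, Cardinal.mk_ord_toType]
    exact hι
  haveI : IsWellOrder (continuum.{u}).ord.ToType (· < ·) := isWellOrder_lt
  let T' : (continuum.{u}).ord.ToType → Set X :=
    fun x => if h : ∃ i, e i = x then T h.choose else T (Classical.arbitrary ι)
  have hT' : ∀ x, continuum.{u} ≤ #(T' x) := by
    intro x
    by_cases h : ∃ i, e i = x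
    · simp only [T', dif_pos h]; exact hT _
    · simp only [T', dif_neg h]; exact hT _
  have hT'e : ∀ i, T' (e i) = T i := by
    intro i
    have h : ∃ j, e j = e i := ⟨i, rfl⟩
    simp only [T', dif_pos h]
    exact congrArg T (e.injective h.choose_spec)
  have hseg : ∀ x : (continuum.{u}).ord.ToType,
      #{y : (continuum.{u}).ord.ToType // y < x} < continuum.{u} := by
    intro x
    have h1 := Ordinal.typein_lt_type
      ((· < ·) : (continuum.{u}).ord.ToType → (continuum.{u}).ord.ToType → Prop) x
    rw [Ordinal.type_toType] at h1
    rw [← Ordinal.card_typein (r := (· < ·))]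
    exact Cardinal.lt_ord.mp h1
  have hpick : ∀ (x : (continuum.{u}).ord.ToType) (s : Set X),
      Cardinal.mk s < continuum.{u} → (T' x \ s).Nonempty := by
    intro x s hs
    rw [Set.diff_nonempty]
    intro hsub
    exact absurd ((hT' x).trans (Cardinal.mk_le_mk_of_subset hsub)) (not_le.mpr hs)
  have husedcard : ∀ (x : (continuum.{u}).ord.ToType)
      (f g : {y : (continuum.{u}).ord.ToType // y < x} → X),
      #((F ∪ (Set.range f ∪ Set.range g) : Set X)) < continuum.{u} := by
    intro x f g
    refine lt_of_le_of_lt (Cardinal.mk_union_le _ _) ?_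
    refine Cardinal.add_lt_of_lt aleph0_le_continuum
      (hF.lt_aleph0.trans_le aleph0_le_continuum) ?_
    refine lt_of_le_of_lt (Cardinal.mk_union_le _ _) ?_
    exact Cardinal.add_lt_of_lt aleph0_le_continuum
      (lt_of_le_of_lt Cardinal.mk_range_le (hseg x))
      (lt_of_le_of_lt Cardinal.mk_range_le (hseg x))
  have ex : ∀ (x : (continuum.{u}).ord.ToType)
      (rec : ∀ y : (continuum.{u}).ord.ToType, y < x → X × X),
      ∃ p : X × X, p.1 ∈ T' x ∧ p.2 ∈ T' x ∧
        p.1 ∉ (F ∪ (Set.range (fun y : {y // y < x} => (rec y.1 y.2).1) ∪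
          Set.range (fun y : {y // y < x} => (rec y.1 y.2).2)) : Set X) ∧
        p.2 ∉ (F ∪ (Set.range (fun y : {y // y < x} => (rec y.1 y.2).1) ∪
          Set.range (fun y : {y // y < x} => (rec y.1 y.2).2)) : Set X) ∧
        p.1 ≠ p.2 := by
    intro x rec
    obtain ⟨z, hz⟩ := hpick x _
      (husedcard x (fun y => (rec y.1 y.2).1) (fun y => (rec y.1 y.2).2))
    have hins : #((insert z (F ∪ (Set.range (fun y : {y // y < x} => (rec y.1 y.2).1) ∪
        Set.range (fun y : {y // y < x} => (rec y.1 y.2).2))) : Set X)) < continuum.{u} := by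
      refine lt_of_le_of_lt Cardinal.mk_insert_le ?_
      exact Cardinal.add_lt_of_lt aleph0_le_continuum
        (husedcard x (fun y => (rec y.1 y.2).1) (fun y => (rec y.1 y.2).2))
        (one_lt_aleph0.trans_le aleph0_le_continuum)
    obtain ⟨w, hw⟩ := hpick x _ hins
    refine ⟨(z, w), hz.1, hw.1, hz.2, ?_, ?_⟩
    · exact fun hmem => hw.2 (Set.mem_insert_iff.mpr (Or.inr hmem))
    · intro hzw
      exact hw.2 (Set.mem_insert_iff.mpr (Or.inl hzw.symm))
  have wf : WellFounded ((· < ·) : (continuum.{u}).ord.ToType →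
      (continuum.{u}).ord.ToType → Prop) := (wellFoundedLT_toType _).wf
  let g : (continuum.{u}).ord.ToType → X × X :=
    wf.fix (fun x rec => Classical.choose (ex x rec))
  have hg : ∀ x, g x = Classical.choose (ex x (fun y _ => g y)) := fun x =>
    wf.fix_eq (fun x rec => Classical.choose (ex x rec)) x
  have spec : ∀ x, (g x).1 ∈ T' x ∧ (g x).2 ∈ T' x ∧
      (g x).1 ∉ (F ∪ (Set.range (fun y : {y // y < x} => (g y.1).1) ∪
        Set.range (fun y : {y // y < x} => (g y.1).2)) : Set X) ∧
      (g x).2 ∉ (F ∪ (Set.range (fun y : {y // y < x} => (g y.1).1) ∪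
        Set.range (fun y : {y // y < x} => (g y.1).2)) : Set X) ∧
      (g x).1 ≠ (g x).2 := by
    intro x
    have h := Classical.choose_spec (ex x (fun y _ => g y))
    rw [← hg x] at h
    exact h
  refine ⟨fun i => (g (e i)).1, fun i => (g (e i)).2, ?_, ?_, ?_, ?_, ?_⟩
  · intro i; have := (spec (e i)).1; rwa [hT'e i] at this
  · intro i; have := (spec (e i)).2.1; rwa [hT'e i] at this
  · intro i j
    show (g (e i)).1 ≠ (g (e j)).2
    rcases lt_trichotomy (e i) (e j) with hlt | heq | hgt
    · intro hAB
      refine (spec (e j)).2.2.2.1 ?_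
      rw [← hAB]
      exact Set.mem_union_right _ (Set.mem_union_left _ ⟨⟨e i, hlt⟩, rfl⟩)
    · have hij : i = j := e.injective heq
      subst hij
      exact (spec (e i)).2.2.2.2
    · intro hAB
      refine (spec (e i)).2.2.1 ?_
      rw [hAB]
      exact Set.mem_union_right _ (Set.mem_union_right _ ⟨⟨e j, hgt⟩, rfl⟩)
  · intro i hmem
    exact (spec (e i)).2.2.1 (Set.mem_union_left _ hmem)
  · intro i hmem
    exact (spec (e i)).2.2.2.1 (Set.mem_union_left _ hmem)

/-- Let `W` be a connected, separable, completely metrizable space (i.e. a connected Polish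
space) with more than one point, in which every closed set whose complement is disconnected is
uncountable. Then `W` is not biconnected: there is `Z ⊆ W` such that `Z` and `W \ Z` are both
connected and each has more than one point. -/
theorem stmt12 (W : Type*) [TopologicalSpace W] [PolishSpace W] [ConnectedSpace W]
    [Nontrivial W]
    (hsep : ∀ S : Set W, IsClosed S → ¬ IsPreconnected Sᶜ → ¬ S.Countable) :
    ∃ Z : Set W, IsConnected Z ∧ IsConnected Zᶜ ∧ Z.Nontrivial ∧ Zᶜ.Nontrivial := by
  classical
  letI := TopologicalSpace.upgradeIsCompletelyMetrizable W
  -- the index type of pairs of disjoint nonempty open sets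
  let I : Type _ := {P : Set W × Set W //
    IsOpen P.1 ∧ IsOpen P.2 ∧ Disjoint P.1 P.2 ∧ P.1.Nonempty ∧ P.2.Nonempty}
  obtain ⟨p, q, hpq⟩ := exists_pair_ne W
  have hd : (0 : ℝ) < dist p q := dist_pos.mpr hpq
  have hdisj0 : Disjoint (Metric.ball p (dist p q / 2)) (Metric.ball q (dist p q / 2)) :=
    Metric.ball_disjoint_ball (by linarith)
  have i0 : I := ⟨(Metric.ball p (dist p q / 2), Metric.ball q (dist p q / 2)),
    Metric.isOpen_ball, Metric.isOpen_ball, hdisj0,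
    ⟨p, Metric.mem_ball_self (by linarith)⟩, ⟨q, Metric.mem_ball_self (by linarith)⟩⟩
  haveI : Nonempty I := ⟨i0⟩
  -- the cut sets
  let TT : I → Set W := fun i => (i.1.1 ∪ i.1.2)ᶜ
  have hTTclosed : ∀ i : I, IsClosed (TT i) := fun i =>
    (i.2.1.union i.2.2.1).isClosed_compl
  have hTTuncount : ∀ i : I, ¬ (TT i).Countable := by
    intro i
    refine hsep _ (hTTclosed i) ?_
    rw [compl_compl]
    intro hpc
    obtain ⟨x, hx⟩ := hpc i.1.1 i.1.2 i.2.1 i.2.2.1 subset_rfl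
      ⟨i.2.2.2.2.1.choose, Or.inl i.2.2.2.2.1.choose_spec, i.2.2.2.2.1.choose_spec⟩
      ⟨i.2.2.2.2.2.choose, Or.inr i.2.2.2.2.2.choose_spec, i.2.2.2.2.2.choose_spec⟩
    exact (i.2.2.2.1).le_bot ⟨hx.2.1, hx.2.2⟩
  have hTTcard : ∀ i : I, continuum ≤ #(TT i) := by
    intro i
    obtain ⟨f, hfr, -, hfi⟩ :=
      (hTTclosed i).exists_nat_bool_injection_of_not_countable (hTTuncount i)
    have hemb : Nonempty ((ℕ → Bool) ↪ (TT i)) := by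
      refine ⟨⟨fun a => ⟨f a, hfr (Set.mem_range_self a)⟩, ?_⟩⟩
      intro a b hab
      exact hfi (congrArg Subtype.val hab)
    have hle := Cardinal.lift_mk_le'.mpr hemb
    have hmk : #(ℕ → Bool) = continuum.{0} := by
      rw [Cardinal.mk_arrow]
      simp [Cardinal.mk_bool, Cardinal.two_power_aleph0]
    rw [hmk, Cardinal.lift_continuum, Cardinal.lift_uzero] at hle
    exact hle
  -- cardinality of the index set
  have hIcard : #I ≤ continuum := by
    obtain ⟨b, hbc, -, hb⟩ := TopologicalSpace.exists_countable_basis W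
    have hOpens : #{s : Set W // IsOpen s} ≤ continuum := by
      have hval : ∀ s : {s : Set W // IsOpen s}, (s : Set W) = ⋃₀ {t ∈ b | t ⊆ (s : Set W)} :=
        fun s => hb.open_eq_sUnion' s.2
      have hinj : Function.Injective
          (fun s : {s : Set W // IsOpen s} => {t : b | (t : Set W) ⊆ (s : Set W)}) := by
        intro s1 s2 h
        replace h : {t : b | (t : Set W) ⊆ (s1 : Set W)} = {t : b | (t : Set W) ⊆ (s2 : Set W)} := h
        ext x
        constructor
        · intro hx
          have hx' : x ∈ ⋃₀ {t ∈ b | t ⊆ (s1 : Set W)} := (hval s1) ▸ hx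
          obtain ⟨t, ⟨htb, hts⟩, hxt⟩ := hx'
          have hmem : (⟨t, htb⟩ : b) ∈ {t : b | (t : Set W) ⊆ (s1 : Set W)} := hts
          rw [h] at hmem
          exact hmem hxt
        · intro hx
          have hx' : x ∈ ⋃₀ {t ∈ b | t ⊆ (s2 : Set W)} := (hval s2) ▸ hx
          obtain ⟨t, ⟨htb, hts⟩, hxt⟩ := hx'
          have hmem : (⟨t, htb⟩ : b) ∈ {t : b | (t : Set W) ⊆ (s2 : Set W)} := hts
          rw [← h] at hmem
          exact hmem hxt
      calc #{s : Set W // IsOpen s} ≤ #(Set b) := Cardinal.mk_le_of_injective hinj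
        _ = 2 ^ #b := Cardinal.mk_set
        _ ≤ 2 ^ (ℵ₀ : Cardinal) := by
            refine Cardinal.power_le_power_left two_ne_zero ?_
            exact Cardinal.mk_le_aleph0_iff.mpr hbc.to_subtype
        _ = continuum := Cardinal.two_power_aleph0
    have hinj2 : Function.Injective (fun i : I =>
        ((⟨i.1.1, i.2.1⟩ : {s : Set W // IsOpen s}), (⟨i.1.2, i.2.2.1⟩ : {s : Set W // IsOpen s}))) := by
      intro i j h
      have h1 : i.1.1 = j.1.1 := congrArg (fun z => (z.1 : Set W)) h
      have h2 : i.1.2 = j.1.2 := congrArg (fun z => (z.2 : Set W)) h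
      exact Subtype.ext (Prod.ext h1 h2)
    calc #I ≤ #({s : Set W // IsOpen s} × {s : Set W // IsOpen s}) :=
          Cardinal.mk_le_of_injective hinj2
      _ = #{s : Set W // IsOpen s} * #{s : Set W // IsOpen s} := by
          rw [Cardinal.mk_prod, Cardinal.lift_id]
      _ ≤ continuum * continuum := mul_le_mul' hOpens hOpens
      _ = continuum := Cardinal.mul_eq_self aleph0_le_continuum
  -- four distinct points
  have hinf : (TT i0).Infinite := fun h => hTTuncount i0 h.countable
  let emb := hinf.natEmbedding
  let a1 : W := (emb 0 : TT i0)
  let a2 : W := (emb 1 : TT i0)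
  let b1 : W := (emb 2 : TT i0)
  let b2 : W := (emb 3 : TT i0)
  have hembne : ∀ {m n : ℕ}, m ≠ n → ((emb m : TT i0) : W) ≠ ((emb n : TT i0) : W) := by
    intro m n hmn h
    exact hmn (emb.injective (Subtype.ext h))
  have ha12 : a1 ≠ a2 := hembne (by norm_num)
  have hb12 : b1 ≠ b2 := hembne (by norm_num)
  have ha1b1 : a1 ≠ b1 := hembne (by norm_num)
  have ha1b2 : a1 ≠ b2 := hembne (by norm_num)
  have ha2b1 : a2 ≠ b1 := hembne (by norm_num)
  have ha2b2 : a2 ≠ b2 := hembne (by norm_num)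
  -- the transversals
  obtain ⟨A, B, hAT, hBT, hAB, hAF, hBF⟩ :=
    exists_disjoint_transversals TT ({a1, a2, b1, b2} : Set W)
      (Set.toFinite _) hIcard hTTcard
  -- connectivity criterion
  have conn : ∀ Y : Set W, (∀ i : I, (Y ∩ TT i).Nonempty) → IsPreconnected Y := by
    intro Y hY
    intro u v hu hv hYuv hYu hYv
    by_contra hempty
    rw [Set.not_nonempty_iff_eq_empty] at hempty
    set Z1 := Y ∩ u with hZ1
    set Z2 := Y ∩ v with hZ2
    have hZ1ne : Z1.Nonempty := hYu
    have hZ2ne : Z2.Nonempty := hYv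
    have hsepnt : ∀ x ∈ Z1, ∀ y ∈ Z2, True := fun _ _ _ _ => trivial
    have hncl2 : ∀ x ∈ Z1, x ∉ closure Z2 := by
      intro x hx hxcl
      obtain ⟨y, hyu, hyY, hyv⟩ := _root_.mem_closure_iff.mp hxcl u hu hx.2
      have : y ∈ Y ∩ (u ∩ v) := ⟨hyY, hyu, hyv⟩
      rw [hempty] at this
      exact this
    have hncl1 : ∀ x ∈ Z2, x ∉ closure Z1 := by
      intro x hx hxcl
      obtain ⟨y, hyv, hyY, hyu⟩ := _root_.mem_closure_iff.mp hxcl v hv hx.2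
      have : y ∈ Y ∩ (u ∩ v) := ⟨hyY, hyu, hyv⟩
      rw [hempty] at this
      exact this
    have key1 : ∀ x ∈ Z1, 0 < Metric.infDist x Z2 := by
      intro x hx
      refine lt_of_le_of_ne Metric.infDist_nonneg (Ne.symm ?_)
      intro h0
      exact hncl2 x hx ((Metric.mem_closure_iff_infDist_zero hZ2ne).mpr h0)
    have key2 : ∀ x ∈ Z2, 0 < Metric.infDist x Z1 := by
      intro x hx
      refine lt_of_le_of_ne Metric.infDist_nonneg (Ne.symm ?_)
      intro h0
      exact hncl1 x hx ((Metric.mem_closure_iff_infDist_zero hZ1ne).mpr h0)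
    set U := {x : W | Metric.infDist x Z1 < Metric.infDist x Z2} with hUdef
    set V := {x : W | Metric.infDist x Z2 < Metric.infDist x Z1} with hVdef
    have hUopen : IsOpen U :=
      isOpen_lt (Metric.continuous_infDist_pt Z1) (Metric.continuous_infDist_pt Z2)
    have hVopen : IsOpen V :=
      isOpen_lt (Metric.continuous_infDist_pt Z2) (Metric.continuous_infDist_pt Z1)
    have hUV : Disjoint U V := by
      rw [Set.disjoint_left]
      intro x hxU hxV
      exact lt_asymm (show Metric.infDist x Z1 < Metric.infDist x Z2 from hxU)
        (show Metric.infDist x Z2 < Metric.infDist x Z1 from hxV)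
    have hZ1U : Z1 ⊆ U := by
      intro x hx
      have h1 : Metric.infDist x Z1 = 0 := Metric.infDist_zero_of_mem hx
      have h2 := key1 x hx
      show Metric.infDist x Z1 < Metric.infDist x Z2
      rw [h1]
      exact h2
    have hZ2V : Z2 ⊆ V := by
      intro x hx
      have h1 : Metric.infDist x Z2 = 0 := Metric.infDist_zero_of_mem hx
      have h2 := key2 x hx
      show Metric.infDist x Z2 < Metric.infDist x Z1
      rw [h1]
      exact h2
    let iUV : I := ⟨(U, V), hUopen, hVopen, hUV, hZ1ne.mono hZ1U, hZ2ne.mono hZ2V⟩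
    obtain ⟨z, hzY, hzc⟩ := hY iUV
    have hzuv : z ∈ u ∪ v := hYuv hzY
    rcases hzuv with hz | hz
    · exact hzc (Or.inl (hZ1U ⟨hzY, hz⟩))
    · exact hzc (Or.inr (hZ2V ⟨hzY, hz⟩))
  -- the set Z
  set Z : Set W := Set.range A ∪ {a1, a2} with hZdef
  have ha1Z : a1 ∈ Z := Or.inr (Or.inl rfl)
  have ha2Z : a2 ∈ Z := Or.inr (Or.inr rfl)
  have hBnotZ : ∀ i : I, B i ∉ Z := by
    intro i h
    rcases h with ⟨j, hj⟩ | h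
    · exact hAB j i hj
    · rcases h with h | h
      · exact hBF i (by rw [show B i = a1 from h]; exact Or.inl rfl)
      · exact hBF i (by rw [show B i = a2 from h]; exact Or.inr (Or.inl rfl))
  have hb1c : b1 ∈ Zᶜ := by
    intro h
    rcases h with ⟨j, hj⟩ | h
    · exact hAF j (by rw [hj]; exact Or.inr (Or.inr (Or.inl rfl)))
    · rcases h with h | h
      · exact ha1b1 h.symm
      · exact ha2b1 h.symm
  have hb2c : b2 ∈ Zᶜ := by
    intro h
    rcases h with ⟨j, hj⟩ | h
    · exact hAF j (by rw [hj]; exact Or.inr (Or.inr (Or.inr rfl)))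
    · rcases h with h | h
      · exact ha1b2 h.symm
      · exact ha2b2 h.symm
  have hZconn : IsConnected Z :=
    ⟨⟨a1, ha1Z⟩, conn Z (fun i => ⟨A i, Or.inl ⟨i, rfl⟩, hAT i⟩)⟩
  have hZcconn : IsConnected Zᶜ :=
    ⟨⟨b1, hb1c⟩, conn Zᶜ (fun i => ⟨B i, hBnotZ i, hBT i⟩)⟩
  exact ⟨Z, hZconn, hZcconn, ⟨a1, ha1Z, a2, ha2Z, ha12⟩, ⟨b1, hb1c, b2, hb2c, hb12⟩⟩
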